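/- Let M be an atomic Puiseux monoid. If 0 is a limit point of M \ {0}, then ρ(M) = ∞. -/

import Mathlib

open scoped NNRat ENNReal

/-- The set of atoms of a Puiseux monoid (additive submonoid of `ℚ≥0`). -/
def PMatoms (M : AddSubmonoid ℚ≥0) : Set ℚ≥0 :=
  {a | a ∈ M ∧ a ≠ 0 ∧ ∀ y ∈ M, ∀ z ∈ M, y ≠ 0 → z ≠ 0 → a ≠ y + z}

/-- A Puiseux monoid is atomic if it is generated by its atoms. -/
def PMatomic (M : AddSubmonoid ℚ≥0) : Prop :=
  ∀ x ∈ M, x ∈ AddSubmonoid.closure (PMatoms M)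

/-- The set of factorizations of `x` in `M`: multisets of atoms summing to `x`. -/
def PMfactorizations (M : AddSubmonoid ℚ≥0) (x : ℚ≥0) : Set (Multiset ℚ≥0) :=
  {s | (∀ a ∈ s, a ∈ PMatoms M) ∧ s.sum = x}

/-- The set of lengths of `x` in `M`. -/
def PMlengths (M : AddSubmonoid ℚ≥0) (x : ℚ≥0) : Set ℕ :=
  Multiset.card '' PMfactorizations M x

/-- The elasticity of an element: `sup L(x) / inf L(x)` in `ℝ≥0∞`, `1` for `x = 0`. -/
noncomputable def PMelasticityOf (M : AddSubmonoid ℚ≥0) (x : ℚ≥0) : ℝ≥0∞ :=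
  if x = 0 then 1
  else sSup ((fun n : ℕ => (n : ℝ≥0∞)) '' PMlengths M x) /
       sInf ((fun n : ℕ => (n : ℝ≥0∞)) '' PMlengths M x)

/-- The elasticity of a Puiseux monoid. -/
noncomputable def PMelasticity (M : AddSubmonoid ℚ≥0) : ℝ≥0∞ :=
  ⨆ x ∈ M, PMelasticityOf M x

/-- The union of sets of lengths containing `n`. -/
def PMunionOfLengths (M : AddSubmonoid ℚ≥0) (n : ℕ) : Set ℕ :=
  {m | ∃ x : ℚ≥0, n ∈ PMlengths M x ∧ m ∈ PMlengths M x}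

/-- The `n`-th local elasticity `ρ_n(M) = sup U_n(M)` in `ℝ≥0∞`. -/
noncomputable def PMlocalElasticity (M : AddSubmonoid ℚ≥0) (n : ℕ) : ℝ≥0∞ :=
  sSup ((fun m : ℕ => (m : ℝ≥0∞)) '' PMunionOfLengths M n)

/-- The set of distances of an element `x` of `M`. -/
def PMdistances (M : AddSubmonoid ℚ≥0) (x : ℚ≥0) : Set ℕ :=
  {d | 0 < d ∧ ∃ l ∈ PMlengths M x,
    PMlengths M x ∩ Set.Icc l (l + d) = {l, l + d}}

/-- The set of distances (delta set) of `M`. -/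
def PMDelta (M : AddSubmonoid ℚ≥0) : Set ℕ :=
  ⋃ x ∈ {y : ℚ≥0 | y ∈ M ∧ y ≠ 0}, PMdistances M x

/-- `(Mi)` is an approximation of `M`: an increasing sequence of atomic submonoids
with union `M` and increasing sets of atoms. -/
def PMapprox (M : AddSubmonoid ℚ≥0) (Mi : ℕ → AddSubmonoid ℚ≥0) : Prop :=
  (∀ i, Mi i ≤ Mi (i + 1)) ∧ (∀ i, PMatomic (Mi i)) ∧
  (∀ i, PMatoms (Mi i) ⊆ PMatoms (Mi (i + 1))) ∧
  (∀ x, x ∈ M ↔ ∃ i, x ∈ Mi i)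

-- small atoms exist
lemma small_atom (M : AddSubmonoid ℚ≥0) (hM : PMatomic M)
    (h0 : ∀ ε : ℚ≥0, 0 < ε → ∃ x ∈ M, x ≠ 0 ∧ x < ε) :
    ∀ ε : ℚ≥0, 0 < ε → ∃ a ∈ PMatoms M, a < ε := by
  intro ε hε
  obtain ⟨x, hxM, hx0, hxε⟩ := h0 ε hε
  obtain ⟨l, hl, hsum⟩ := AddSubmonoid.exists_multiset_of_mem_closure (hM x hxM)
  have hne : l ≠ 0 := by
    rintro rfl; simp at hsum; exact hx0 hsum.symm
  obtain ⟨a, ha⟩ := Multiset.exists_mem_of_ne_zero hne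
  refine ⟨a, hl a ha, lt_of_le_of_lt ?_ hxε⟩
  rw [← hsum]
  exact Multiset.single_le_sum (fun y _ => zero_le) a ha

lemma replicate_mem_lengths (M : AddSubmonoid ℚ≥0) (a : ℚ≥0) (ha : a ∈ PMatoms M)
    (k : ℕ) : k ∈ PMlengths M (k • a) := by
  refine ⟨Multiset.replicate k a, ⟨?_, ?_⟩, Multiset.card_replicate k a⟩
  · intro b hb; rw [Multiset.eq_of_mem_replicate hb]; exact ha
  · simp [Multiset.sum_replicate]

theorem stmt6 (M : AddSubmonoid ℚ≥0) (hM : PMatomic M)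
    (h0 : ∀ ε : ℚ≥0, 0 < ε → ∃ x ∈ M, x ≠ 0 ∧ x < ε) :
    PMelasticity M = ⊤ := by
  apply ENNReal.eq_top_of_forall_nnreal_le
  intro r
  obtain ⟨a, haA, -⟩ := small_atom M hM h0 1 one_pos
  obtain ⟨n, hn⟩ : ∃ n : ℕ, n = ⌈r⌉₊ := ⟨_, rfl⟩
  have ha0 : a ≠ 0 := haA.2.1
  have hapos : 0 < a := pos_iff_ne_zero.mpr ha0
  obtain ⟨b, hbA, hbs⟩ := small_atom M hM h0 (a / (n + 1)) (by positivity)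
  have hb0 : b ≠ 0 := hbA.2.1
  have hbpos : (0:ℚ≥0) < b := pos_iff_ne_zero.mpr hb0
  obtain ⟨k, hk⟩ : ∃ k : ℕ, k = b.num * a.den := ⟨_, rfl⟩
  obtain ⟨m, hmm⟩ : ∃ m : ℕ, m = a.num * b.den := ⟨_, rfl⟩
  have hden : ∀ q : ℚ≥0, (q.den : ℚ≥0) * q = q.num := by
    intro q; exact NNRat.den_mul_eq_num q
  have hkey : (k : ℚ≥0) * a = (m : ℚ≥0) * b := by
    rw [hk, hmm]
    push_cast
    rw [mul_assoc, mul_assoc, hden a, hden b]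
    ring
  have hk0 : k ≠ 0 := by
    have h1 : 0 < b.num := by rw [NNRat.num_pos]; exact hbpos
    rw [hk]; positivity
  have hm0 : m ≠ 0 := by
    have h1 : 0 < a.num := by rw [NNRat.num_pos]; exact hapos
    rw [hmm]; positivity
  -- nat inequality n * k ≤ m
  have hineq : n * k ≤ m := by
    have h1 : (b : ℚ≥0) * (n + 1) < a := by
      rwa [lt_div_iff₀ (by positivity)] at hbs
    have h2 : ((k * (n + 1) : ℕ) : ℚ≥0) * b < ((m : ℕ) : ℚ≥0) * b := by
      calc ((k * (n + 1) : ℕ) : ℚ≥0) * b = (k : ℚ≥0) * (b * (n + 1)) := by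
            push_cast; ring
        _ < (k : ℚ≥0) * a := by
            exact mul_lt_mul_of_pos_left h1 (by positivity)
        _ = ((m : ℕ) : ℚ≥0) * b := hkey
    have h3 : k * (n + 1) < m := by
      have h4 : ((k * (n + 1) : ℕ) : ℚ≥0) < ((m : ℕ) : ℚ≥0) :=
        lt_of_mul_lt_mul_right h2 hbpos.le
      exact_mod_cast h4
    calc n * k ≤ k * (n + 1) := by nlinarith
      _ ≤ m := h3.le
  -- the element with two factorization lengths
  obtain ⟨y, hy⟩ : ∃ y : ℚ≥0, y = k • a := ⟨_, rfl⟩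
  have hyM : y ∈ M := hy ▸ AddSubmonoid.nsmul_mem M haA.1 k
  have hy0 : y ≠ 0 := by
    simp only [hy, smul_ne_zero_iff]
    exact ⟨hk0, ha0⟩
  have hkL : k ∈ PMlengths M y := hy ▸ replicate_mem_lengths M a haA k
  have hmL : m ∈ PMlengths M y := by
    have : y = m • b := by rw [hy, nsmul_eq_mul, nsmul_eq_mul, hkey]
    rw [this]
    exact replicate_mem_lengths M b hbA m
  -- bound the elasticity of y
  have helas : (n : ℝ≥0∞) ≤ PMelasticityOf M y := by
    rw [PMelasticityOf, if_neg hy0]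
    have hsup : (m : ℝ≥0∞) ≤ sSup ((fun n : ℕ => (n : ℝ≥0∞)) '' PMlengths M y) :=
      le_sSup ⟨m, hmL, rfl⟩
    have hinf : sInf ((fun n : ℕ => (n : ℝ≥0∞)) '' PMlengths M y) ≤ (k : ℝ≥0∞) :=
      sInf_le ⟨k, hkL, rfl⟩
    refine le_trans ?_ (ENNReal.div_le_div hsup hinf)
    rw [ENNReal.le_div_iff_mul_le (Or.inl (by exact_mod_cast hk0))
      (Or.inl (ENNReal.natCast_ne_top k))]
    exact_mod_cast hineq
  have hrn : (r : ℝ≥0∞) ≤ (n : ℝ≥0∞) := by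
    rw [hn]
    exact_mod_cast (Nat.le_ceil r)
  refine le_trans hrn (le_trans helas ?_)
  rw [PMelasticity]
  exact le_iSup₂ (f := fun x (_ : x ∈ M) => PMelasticityOf M x) y hyM
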